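/- Let A be an abelian category and consider a 3×3 commutative diagram whose three rows and three columns are all short exact, with notation as in the rows X ↣ X' ↠ X'', Y ↣ Y' ↠ Y'', Z ↣ Z' ↠ Z'' and columns X ↣ Y ↠ Z etc. Then the sequence X → Y' → Z' ×_{Z''} Y'' is short exact, where X → Y' is i^Y ∘ f and Y' → Z' ×_{Z''} Y'' is induced by p^Y : Y' → Y'' and g' : Y' → Z' via the pullback. -/

import Mathlib

open CategoryTheory Limits

/-- Let `A` be an abelian category and consider a 3×3 commutative
diagram with rows `X ↣ X' ↠ X''`, `Y ↣ Y' ↠ Y''`, `Z ↣ Z' ↠ Z''` and columns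
`X ↣ Y ↠ Z`, `X' ↣ Y' ↠ Z'`, `X'' ↣ Y'' ↠ Z''`, all short exact.  Then the sequence
`X → Y' → Z' ×_{Z''} Y''` is short exact, where `X → Y'` is `f ≫ iY` and
`Y' → Z' ×_{Z''} Y''` is induced by `g'` and `pY` via the universal property of the
pullback of `pZ : Z' → Z''` along `g'' : Y'' → Z''`. -/
theorem stmt_11 {A : Type*} [Category A] [Abelian A]
    {X X' X'' Y Y' Y'' Z Z' Z'' : A}
    (iX : X ⟶ X') (pX : X' ⟶ X'') (iY : Y ⟶ Y') (pY : Y' ⟶ Y'')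
    (iZ : Z ⟶ Z') (pZ : Z' ⟶ Z'')
    (f : X ⟶ Y) (g : Y ⟶ Z) (f' : X' ⟶ Y') (g' : Y' ⟶ Z')
    (f'' : X'' ⟶ Y'') (g'' : Y'' ⟶ Z'')
    -- commutativity of the diagram
    (sq1 : f ≫ iY = iX ≫ f') (sq2 : f' ≫ pY = pX ≫ f'')
    (sq3 : g ≫ iZ = iY ≫ g') (sq4 : g' ≫ pZ = pY ≫ g'')
    -- short exactness of the three rows
    (wX : iX ≫ pX = 0) (wY : iY ≫ pY = 0) (wZ : iZ ≫ pZ = 0)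
    (hX : (ShortComplex.mk iX pX wX).ShortExact)
    (hY : (ShortComplex.mk iY pY wY).ShortExact)
    (hZ : (ShortComplex.mk iZ pZ wZ).ShortExact)
    -- short exactness of the three columns
    (wc1 : f ≫ g = 0) (wc2 : f' ≫ g' = 0) (wc3 : f'' ≫ g'' = 0)
    (hc1 : (ShortComplex.mk f g wc1).ShortExact)
    (hc2 : (ShortComplex.mk f' g' wc2).ShortExact)
    (hc3 : (ShortComplex.mk f'' g'' wc3).ShortExact) :
    ∃ w : (f ≫ iY) ≫ pullback.lift g' pY sq4 = 0,
      (ShortComplex.mk (f ≫ iY) (pullback.lift g' pY sq4) w).ShortExact := by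
  have hmf : Mono f := hc1.mono_f
  have hmiY : Mono iY := hY.mono_f
  have hmiZ : Mono iZ := hZ.mono_f
  have hmf'' : Mono f'' := hc3.mono_f
  have hepX : Epi pX := hX.epi_g
  have hepY : Epi pY := hY.epi_g
  have heg' : Epi g' := hc2.epi_g
  have heg'' : Epi g'' := hc3.epi_g
  set l := pullback.lift g' pY sq4 with hl
  have w : (f ≫ iY) ≫ l = 0 := by
    apply pullback.hom_ext
    · simp [hl, Category.assoc, ← sq3, reassoc_of% wc1, pullback.lift_fst, pullback.lift_snd, pullback.lift_fst_assoc, pullback.lift_snd_assoc]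
    · simp [hl, Category.assoc, wY, pullback.lift_fst, pullback.lift_snd, pullback.lift_fst_assoc, pullback.lift_snd_assoc]
  refine ⟨w, ?_⟩
  -- `f ≫ iY` is a kernel of `l`
  have hker : IsLimit (KernelFork.ofι (f ≫ iY) w) := by
    refine KernelFork.IsLimit.ofι' _ _ (fun {T} k hk => ?_)
    have hk2 : k ≫ pY = 0 := by
      have := hk =≫ pullback.snd pZ g''
      simpa [hl, Category.assoc, pullback.lift_fst, pullback.lift_snd, pullback.lift_fst_assoc, pullback.lift_snd_assoc] using this
    have hk1 : k ≫ g' = 0 := by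
      have := hk =≫ pullback.fst pZ g''
      simpa [hl, Category.assoc, pullback.lift_fst, pullback.lift_snd, pullback.lift_fst_assoc, pullback.lift_snd_assoc] using this
    let y : T ⟶ Y := hY.exact.lift k hk2
    have hy : y ≫ iY = k := hY.exact.lift_f k hk2
    have hyg : y ≫ g = 0 := by
      rw [← cancel_mono iZ, Category.assoc, sq3, zero_comp, ← Category.assoc, hy, hk1]
    exact ⟨hc1.exact.lift y hyg, by
      rw [← Category.assoc]
      -- (hc1.exact.lift y hyg) ≫ f = y
      rw [show hc1.exact.lift y hyg ≫ f = y from hc1.exact.lift_f y hyg, hy]⟩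
  have hmono : Mono ((ShortComplex.mk (f ≫ iY) l w).f) := mono_comp f iY
  have hepi : Epi ((ShortComplex.mk (f ≫ iY) l w).g) := by
    show Epi l
    -- the map `X'' ⟶ P` and the fact that `pullback.fst` is its cokernel
    have wm : (0 : X'' ⟶ Z') ≫ pZ = f'' ≫ g'' := by simp [wc3]
    set m := pullback.lift (0 : X'' ⟶ Z') f'' wm with hm
    have hmfst : m ≫ pullback.fst pZ g'' = 0 := by simp [hm, pullback.lift_fst, pullback.lift_snd, pullback.lift_fst_assoc, pullback.lift_snd_assoc]
    have hmker : IsLimit (KernelFork.ofι m hmfst) := by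
      have hmm : Mono m := mono_of_mono_fac (pullback.lift_snd _ _ wm)
      refine KernelFork.IsLimit.ofι' _ _ (fun {T} v hv => ?_)
      have hs : (v ≫ pullback.snd pZ g'') ≫ g'' = 0 := by
        rw [Category.assoc, ← pullback.condition, ← Category.assoc, hv, zero_comp]
      refine ⟨hc3.exact.lift _ hs, pullback.hom_ext ?_ ?_⟩
      · simp [hm, hv, pullback.lift_fst, pullback.lift_snd, pullback.lift_fst_assoc, pullback.lift_snd_assoc]
      · simpa [hm, pullback.lift_fst, pullback.lift_snd, pullback.lift_fst_assoc, pullback.lift_snd_assoc] using hc3.exact.lift_f _ hs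
    have hfst : Epi (pullback.fst pZ g'') := inferInstance
    have hcoker : IsColimit (CokernelCofork.ofπ (pullback.fst pZ g'')
        (KernelFork.condition (KernelFork.ofι m hmfst))) :=
      Abelian.epiIsCokernelOfKernel _ hmker
    have hsq : f' ≫ l = pX ≫ m := by
      apply pullback.hom_ext
      · simp [hl, hm, wc2, pullback.lift_fst, pullback.lift_snd, pullback.lift_fst_assoc, pullback.lift_snd_assoc]
      · simp [hl, hm, sq2, pullback.lift_fst, pullback.lift_snd, pullback.lift_fst_assoc, pullback.lift_snd_assoc]
    refine Preadditive.epi_of_cancel_zero _ (fun {T} t ht => ?_)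
    have hmt : m ≫ t = 0 := by
      have : pX ≫ m ≫ t = 0 := by
        rw [← Category.assoc, ← hsq, Category.assoc, ht, comp_zero]
      exact (cancel_epi pX).mp (by simpa using this)
    set u := hcoker.desc (CokernelCofork.ofπ t hmt) with hu
    have hfu : pullback.fst pZ g'' ≫ u = t := Cofork.IsColimit.π_desc hcoker
    have : g' ≫ u = 0 := by
      have := pullback.lift_fst g' pY sq4
      rw [← this, Category.assoc, hfu, ht]
    have hu0 : u = 0 := (cancel_epi g').mp (by simpa using this)
    rw [← hfu, hu0, comp_zero]

  exact { exact := ShortComplex.exact_of_f_is_kernel _ hker,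
          mono_f := hmono, epi_g := hepi }
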